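/- arXiv:1103.4349 — 3 statements merged into one kernel-verified Lean document; each statement's English description precedes it below -/
import Mathlib

section
/- Let E be a finite-dimensional real inner product space, m ≥ 1, and let H be the space of m-tuples of elements of E with inner product ⟨h, h'⟩ = Σ_{i=1}^m ⟨h_i, h'_i⟩ (identifying ℝᵐ ⊗ E with H). Let F ⊆ H be a linear subspace, Π the orthogonal projection of H onto F and Π^⊥ the orthogonal projection onto F^⊥. Let φ : ℝᵐ → E be differentiable at a point x with φ(x) ≠ 0, let Dφ(x) := (∂φ/∂x₁(x), …, ∂φ/∂x_m(x)) ∈ H, and suppose Π(Dφ(x)) = 0. Then the function y ↦ ‖φ(y)‖ is differentiable at x, and there exists ξ₀ ∈ ℝᵐ with ‖ξ₀‖ = 1 such that ‖d‖φ‖(x)‖ · ‖φ(x)‖ ≤ ‖Dφ(x)‖_H · ‖Π^⊥(ξ₀ ⊗ φ(x))‖_H, where d‖φ‖(x) is the Fréchet derivative at x of y ↦ ‖φ(y)‖, ‖d‖φ‖(x)‖ is its operator norm, and ξ₀ ⊗ φ(x) denotes the tuple ((ξ₀)₁·φ(x), …, (ξ₀)_m·φ(x)) ∈ H. -/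
open scoped RealInnerProductSpace

/-- Derivative of the norm of a differentiable function at a nonvanishing point. -/
theorem hasFDerivAt_norm_of_ne {G E : Type*} [NormedAddCommGroup G] [NormedSpace ℝ G]
    [NormedAddCommGroup E] [InnerProductSpace ℝ E] {f : G → E} {f' : G →L[ℝ] E} {x : G}
    (hf : HasFDerivAt f f' x) (h0 : f x ≠ 0) :
    HasFDerivAt (fun y => ‖f y‖) (‖f x‖⁻¹ • ((innerSL ℝ (f x)).comp f')) x := by
  have hsq : HasFDerivAt (fun y => ‖f y‖ ^ 2) (2 • (innerSL ℝ (f x)).comp f') x := hf.norm_sq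
  have hne : ‖f x‖ ^ 2 ≠ 0 := pow_ne_zero 2 (norm_ne_zero_iff.mpr h0)
  have key := hsq.sqrt hne
  have heq : (fun y => Real.sqrt (‖f y‖ ^ 2)) = fun y => ‖f y‖ := by
    funext y; exact Real.sqrt_sq (norm_nonneg _)
  rw [heq] at key
  convert key using 1
  have : Real.sqrt (‖f x‖ ^ 2) = ‖f x‖ := Real.sqrt_sq (norm_nonneg _)
  rw [this]
  ext v
  simp only [ContinuousLinearMap.coe_smul', Pi.smul_apply, ContinuousLinearMap.smul_apply,
    nsmul_eq_mul, Nat.cast_ofNat, smul_eq_mul]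
  have hnx : ‖f x‖ ≠ 0 := norm_ne_zero_iff.mpr h0
  field_simp

/-- If `φ : ℝᵐ → E` is differentiable at `x`, `φ x ≠ 0`, and the tuple
of partial derivatives `Dφ(x) ∈ H = (ℝᵐ ⊗ E, ⟨h,h'⟩ = Σᵢ⟨hᵢ,h'ᵢ⟩)` lies in the kernel of
the orthogonal projection `Π` onto `F ⊆ H`, then `y ↦ ‖φ y‖` is differentiable at `x` and
`‖d‖φ‖(x)‖ · ‖φ(x)‖ ≤ ‖Dφ(x)‖ · ‖Π^⊥(ξ₀ ⊗ φ(x))‖` for some unit covector `ξ₀`. -/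
theorem stmt5 {E : Type*} [NormedAddCommGroup E] [InnerProductSpace ℝ E]
    [FiniteDimensional ℝ E] (m : ℕ) (hm : 1 ≤ m)
    (F : Submodule ℝ (PiLp 2 fun _ : Fin m => E))
    (φ : EuclideanSpace ℝ (Fin m) → E) (x : EuclideanSpace ℝ (Fin m))
    (hφ : DifferentiableAt ℝ φ x) (hx : φ x ≠ 0)
    (D : PiLp 2 fun _ : Fin m => E)
    (hD : D = (WithLp.equiv 2 (∀ _ : Fin m, E)).symm
      (fun i => fderiv ℝ φ x (EuclideanSpace.single i 1)))
    (hker : Submodule.orthogonalProjection F D = 0) :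
    DifferentiableAt ℝ (fun y => ‖φ y‖) x ∧
      ∃ ξ₀ : EuclideanSpace ℝ (Fin m), ‖ξ₀‖ = 1 ∧
        ‖fderiv ℝ (fun y => ‖φ y‖) x‖ * ‖φ x‖ ≤
          ‖D‖ * ‖(Submodule.orthogonalProjection Fᗮ
            ((WithLp.equiv 2 (∀ _ : Fin m, E)).symm (fun i => ξ₀ i • φ x)) :
              PiLp 2 fun _ : Fin m => E)‖ := by
  set f' := fderiv ℝ φ x with hf'def
  have hf' : HasFDerivAt φ f' x := hφ.hasFDerivAt
  set L := fderiv ℝ (fun y => ‖φ y‖) x with hLdef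
  have hL : HasFDerivAt (fun y => ‖φ y‖) (‖φ x‖⁻¹ • ((innerSL ℝ (φ x)).comp f')) x :=
    hasFDerivAt_norm_of_ne hf' hx
  have hdiff : DifferentiableAt ℝ (fun y => ‖φ y‖) x := hL.differentiableAt
  have hLeq : L = ‖φ x‖⁻¹ • ((innerSL ℝ (φ x)).comp f') := hL.fderiv
  have hnx : (0:ℝ) < ‖φ x‖ := norm_pos_iff.mpr hx
  -- D i = f' (single i 1)
  have hDi : ∀ i, D i = f' (EuclideanSpace.single i 1) := by
    intro i; rw [hD]; rfl
  -- basis decomposition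
  have hdecomp : ∀ v : EuclideanSpace ℝ (Fin m), v = ∑ i, v i • EuclideanSpace.single i 1 := by
    intro v
    have := (EuclideanSpace.basisFun (Fin m) ℝ).sum_repr v
    simpa [EuclideanSpace.basisFun_apply, EuclideanSpace.basisFun_repr] using this.symm
  have hf'v : ∀ v : EuclideanSpace ℝ (Fin m), f' v = ∑ i, v i • D i := by
    intro v
    conv_lhs => rw [hdecomp v]
    rw [map_sum]
    exact Finset.sum_congr rfl fun i _ => by rw [map_smul, hDi]
  -- the key identity: L v * ‖φ x‖ = ⟪v ⊗ φ x, D⟫_H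
  have hLv : ∀ v : EuclideanSpace ℝ (Fin m),
      L v * ‖φ x‖ =
        ⟪((WithLp.equiv 2 (∀ _ : Fin m, E)).symm (fun i => v i • φ x) :
          PiLp 2 fun _ : Fin m => E), D⟫ := by
    intro v
    rw [hLeq]
    simp only [ContinuousLinearMap.smul_apply, ContinuousLinearMap.coe_comp', Function.comp_apply,
      innerSL_apply_apply, smul_eq_mul]
    rw [PiLp.inner_apply, hf'v v, inner_sum]
    rw [inv_mul_eq_div, div_mul_cancel₀ _ (ne_of_gt hnx)]
    refine Finset.sum_congr rfl fun i _ => ?_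
    show ⟪φ x, v i • D i⟫ = ⟪v i • φ x, D i⟫
    rw [real_inner_smul_left, real_inner_smul_right]
  -- D ∈ Fᗮ
  have hDmem : D ∈ Fᗮ := Submodule.orthogonalProjectionOnto_eq_zero_iff.mp hker
  -- inner with D passes to the orthogonal projection
  have hproj : ∀ w : PiLp 2 fun _ : Fin m => E,
      ⟪w, D⟫ = ⟪(Submodule.orthogonalProjection Fᗮ w : PiLp 2 fun _ : Fin m => E), D⟫ := by
    intro w
    conv_lhs => rw [← show (Submodule.orthogonalProjection F w : PiLp 2 fun _ : Fin m => E) + (Submodule.orthogonalProjection Fᗮ w : PiLp 2 fun _ : Fin m => E) = w from F.starProjection_add_starProjection_orthogonal w]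
    rw [inner_add_left]
    have : ⟪((Submodule.orthogonalProjection F w : PiLp 2 fun _ : Fin m => E)), D⟫ = 0 :=
      hDmem _ (Submodule.orthogonalProjection F w).2
    rw [this, zero_add]
  -- the representing vector of L
  set g : EuclideanSpace ℝ (Fin m) :=
    (WithLp.equiv 2 (Fin m → ℝ)).symm (fun i => L (EuclideanSpace.single i 1)) with hgdef
  have hLg : ∀ v : EuclideanSpace ℝ (Fin m), L v = ⟪g, v⟫ := by
    intro v
    conv_lhs => rw [hdecomp v, map_sum]
    rw [PiLp.inner_apply]
    exact Finset.sum_congr rfl fun i _ => by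
      rw [map_smul]
      simp [hgdef, RCLike.inner_apply, mul_comm]
  have hLnorm : ‖L‖ ≤ ‖g‖ := by
    refine ContinuousLinearMap.opNorm_le_bound _ (norm_nonneg g) fun v => ?_
    rw [hLg v, Real.norm_eq_abs]
    exact abs_real_inner_le_norm g v
  by_cases hg : g = 0
  · -- L = 0
    have hL0 : ‖L‖ = 0 := by
      refine le_antisymm ?_ (norm_nonneg _)
      calc ‖L‖ ≤ ‖g‖ := hLnorm
        _ = 0 := by rw [hg, norm_zero]
    refine ⟨hdiff, EuclideanSpace.single ⟨0, hm⟩ 1, ?_, ?_⟩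
    · simp [EuclideanSpace.norm_single]
    · rw [hL0, zero_mul]
      positivity
  · set ξ₀ : EuclideanSpace ℝ (Fin m) := ‖g‖⁻¹ • g with hξdef
    have hgn : (0:ℝ) < ‖g‖ := norm_pos_iff.mpr hg
    have hξnorm : ‖ξ₀‖ = 1 := by
      rw [hξdef, norm_smul, norm_inv, norm_norm, inv_mul_cancel₀ (ne_of_gt hgn)]
    have hLξ : L ξ₀ = ‖g‖ := by
      rw [hLg, hξdef, real_inner_smul_right, real_inner_self_eq_norm_mul_norm]
      field_simp
    refine ⟨hdiff, ξ₀, hξnorm, ?_⟩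
    set w : PiLp 2 fun _ : Fin m => E :=
      (WithLp.equiv 2 (∀ _ : Fin m, E)).symm (fun i => ξ₀ i • φ x) with hwdef
    calc ‖L‖ * ‖φ x‖ ≤ ‖g‖ * ‖φ x‖ := by
          exact mul_le_mul_of_nonneg_right hLnorm hnx.le
      _ = L ξ₀ * ‖φ x‖ := by rw [hLξ]
      _ = ⟪w, D⟫ := hLv ξ₀
      _ = ⟪(Submodule.orthogonalProjection Fᗮ w : PiLp 2 fun _ : Fin m => E), D⟫ := hproj w
      _ ≤ ‖(Submodule.orthogonalProjection Fᗮ w : PiLp 2 fun _ : Fin m => E)‖ * ‖D‖ :=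
          real_inner_le_norm _ _
      _ = ‖D‖ * ‖(Submodule.orthogonalProjection Fᗮ w : PiLp 2 fun _ : Fin m => E)‖ := mul_comm _ _
end

section
/- Let E be a finite-dimensional real inner product space, m ≥ 1, and let H be the space of m-tuples of elements of E with inner product ⟨h, h'⟩ = Σ_{i=1}^m ⟨h_i, h'_i⟩. Let F ⊆ H be a linear subspace with orthogonal projection Π onto F, and let ε ∈ [0,1] be a constant of ellipticity, i.e. ‖Π(ξ ⊗ v)‖² ≥ ε · ‖ξ‖² · ‖v‖² for all ξ ∈ ℝᵐ and v ∈ E. Let φ : ℝᵐ → E be differentiable at a point x with φ(x) ≠ 0, with Dφ(x) := (∂φ/∂x₁(x), …, ∂φ/∂x_m(x)) ∈ H satisfying Π(Dφ(x)) = 0. Then the function y ↦ ‖φ(y)‖ is differentiable at x and satisfies the refined Kato inequality ‖d‖φ‖(x)‖ ≤ √(1−ε) · ‖Dφ(x)‖_H, where ‖d‖φ‖(x)‖ is the operator norm of the Fréchet derivative at x of y ↦ ‖φ(y)‖. -/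
open scoped RealInnerProductSpace


/-- Refined Kato inequality: if `ε ∈ [0,1]` is a constant of ellipticity
for the orthogonal projection `Π` onto `F ⊆ H` (`‖Π(ξ ⊗ v)‖² ≥ ε‖ξ‖²‖v‖²`), `φ : ℝᵐ → E`
is differentiable at `x`, `φ x ≠ 0`, and the tuple `Dφ(x)` of partial derivatives
satisfies `Π(Dφ(x)) = 0`, then `y ↦ ‖φ y‖` is differentiable at `x` and
`‖d‖φ‖(x)‖ ≤ √(1−ε) · ‖Dφ(x)‖`. -/
theorem stmt6 {E : Type*} [NormedAddCommGroup E] [InnerProductSpace ℝ E]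
    [FiniteDimensional ℝ E] (m : ℕ) (hm : 1 ≤ m)
    (F : Submodule ℝ (PiLp 2 fun _ : Fin m => E)) (ε : ℝ) (hε : ε ∈ Set.Icc (0 : ℝ) 1)
    (hell : ∀ (ξ : EuclideanSpace ℝ (Fin m)) (v : E),
      ε * ‖ξ‖ ^ 2 * ‖v‖ ^ 2 ≤
        ‖(F.orthogonalProjection
            ((WithLp.equiv 2 (∀ _ : Fin m, E)).symm (fun i => ξ i • v)) :
          PiLp 2 fun _ : Fin m => E)‖ ^ 2)
    (φ : EuclideanSpace ℝ (Fin m) → E) (x : EuclideanSpace ℝ (Fin m))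
    (hφ : DifferentiableAt ℝ φ x) (hx : φ x ≠ 0)
    (D : PiLp 2 fun _ : Fin m => E)
    (hD : D = (WithLp.equiv 2 (∀ _ : Fin m, E)).symm
      (fun i => fderiv ℝ φ x (EuclideanSpace.single i 1)))
    (hker : F.orthogonalProjection D = 0) :
    DifferentiableAt ℝ (fun y => ‖φ y‖) x ∧
      ‖fderiv ℝ (fun y => ‖φ y‖) x‖ ≤ Real.sqrt (1 - ε) * ‖D‖ := by
  set f' := fderiv ℝ φ x with hf'
  have hnx : (0:ℝ) < ‖φ x‖ := norm_pos_iff.mpr hx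
  -- derivative of the norm
  set L : EuclideanSpace ℝ (Fin m) →L[ℝ] ℝ :=
    (‖φ x‖)⁻¹ • ((innerSL ℝ (φ x)).comp f') with hL
  have hsq : HasFDerivAt (fun y => ‖φ y‖ ^ 2) (2 • (innerSL ℝ (φ x)).comp f') x :=
    hφ.hasFDerivAt.norm_sq
  have hsqrt : HasDerivAt Real.sqrt (1 / (2 * Real.sqrt (‖φ x‖ ^ 2))) (‖φ x‖ ^ 2) :=
    Real.hasDerivAt_sqrt (by positivity)
  have hcomp : HasFDerivAt (fun y => Real.sqrt (‖φ y‖ ^ 2))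
      ((1 / (2 * Real.sqrt (‖φ x‖ ^ 2))) • (2 • (innerSL ℝ (φ x)).comp f')) x :=
    hsqrt.comp_hasFDerivAt x hsq
  have hEq : (fun y => Real.sqrt (‖φ y‖ ^ 2)) = fun y => ‖φ y‖ := by
    funext y; rw [Real.sqrt_sq (norm_nonneg _)]
  have hLeq : ((1 / (2 * Real.sqrt (‖φ x‖ ^ 2))) • (2 • (innerSL ℝ (φ x)).comp f')) = L := by
    rw [Real.sqrt_sq (norm_nonneg _)]
    ext ξ
    simp [L]
    field_simp
  have hnorm : HasFDerivAt (fun y => ‖φ y‖) L x := by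
    rw [← hEq, ← hLeq]; exact hcomp
  refine ⟨hnorm.differentiableAt, ?_⟩
  rw [hnorm.fderiv]
  -- D is orthogonal to F
  have hDorth : D ∈ Fᗮ := Submodule.orthogonalProjectionOnto_eq_zero_iff.mp hker
  have h1ε : (0:ℝ) ≤ 1 - ε := by linarith [hε.2]
  refine ContinuousLinearMap.opNorm_le_bound _ (by positivity) fun ξ => ?_
  -- key estimate
  set w : PiLp 2 fun _ : Fin m => E :=
    (WithLp.equiv 2 (∀ _ : Fin m, E)).symm (fun i => ξ i • φ x) with hw
  -- f' ξ = ∑ i, ξ i • D i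
  have hxi : ξ = ∑ i, ξ i • EuclideanSpace.single i (1:ℝ) := by
    ext j
    have h : (∑ i, ξ i • EuclideanSpace.single i (1:ℝ)) j
        = ∑ i, (ξ i • EuclideanSpace.single i (1:ℝ)) j := by rw [WithLp.ofLp_sum, Finset.sum_apply]
    rw [h]
    simp [EuclideanSpace.single_apply]
  have hf'ξ : f' ξ = ∑ i, ξ i • D i := by
    conv_lhs => rw [hxi]
    rw [map_sum]
    congr 1; funext i
    rw [hD]
    simp
  -- inner product identity
  have hinner : ⟪φ x, f' ξ⟫ = ⟪w, D⟫ := by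
    rw [hf'ξ, inner_sum, PiLp.inner_apply]
    congr 1; funext i
    rw [hw]
    simp [real_inner_smul_left, real_inner_smul_right]
  -- Π w ∈ F so ⟪Πw, D⟫ = 0
  have hPw : ⟪(F.orthogonalProjection w : PiLp 2 fun _ : Fin m => E), D⟫ = 0 :=
    hDorth (F.orthogonalProjection w : PiLp 2 fun _ : Fin m => E) (F.orthogonalProjection w).2
  have hsplit : ⟪w, D⟫ = ⟪w - F.orthogonalProjection w, D⟫ := by
    rw [inner_sub_left, hPw, sub_zero]
  -- Pythagoras
  have hpyth : ‖w - F.orthogonalProjection w‖ ^ 2 =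
      ‖w‖ ^ 2 - ‖(F.orthogonalProjection w : PiLp 2 fun _ : Fin m => E)‖ ^ 2 := by
    have h0 : ⟪(F.orthogonalProjection w : PiLp 2 fun _ : Fin m => E),
        w - F.orthogonalProjection w⟫ = 0 := by
      rw [real_inner_comm]
      exact Submodule.starProjection_inner_eq_zero w _ (F.orthogonalProjection w).2
    have : ‖(F.orthogonalProjection w : PiLp 2 fun _ : Fin m => E)
        + (w - F.orthogonalProjection w)‖ ^ 2
        = ‖(F.orthogonalProjection w : PiLp 2 fun _ : Fin m => E)‖ ^ 2 + 2 * 0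
        + ‖w - F.orthogonalProjection w‖ ^ 2 := by
      rw [← h0]; exact norm_add_sq_real _ _
    simp only [add_sub_cancel] at this
    linarith
  -- ‖w‖² = ‖ξ‖² ‖φ x‖²
  have hwnorm : ‖w‖ ^ 2 = ‖ξ‖ ^ 2 * ‖φ x‖ ^ 2 := by
    rw [PiLp.norm_sq_eq_of_L2, PiLp.norm_sq_eq_of_L2, Finset.sum_mul]
    congr 1; funext i
    rw [hw]
    simp [norm_smul, mul_pow]
  have hell' := hell ξ (φ x)
  have hbound2 : ‖w - F.orthogonalProjection w‖ ^ 2 ≤ (1 - ε) * (‖ξ‖ ^ 2 * ‖φ x‖ ^ 2) := by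
    rw [hpyth, hwnorm, sub_mul, one_mul]
    have h := hell ξ (φ x)
    rw [← hw] at h
    rw [mul_assoc] at h
    linarith
  have hbound : ‖w - F.orthogonalProjection w‖ ≤ Real.sqrt (1 - ε) * (‖ξ‖ * ‖φ x‖) := by
    have h2 : Real.sqrt (‖w - F.orthogonalProjection w‖ ^ 2)
        ≤ Real.sqrt ((1 - ε) * (‖ξ‖ ^ 2 * ‖φ x‖ ^ 2)) := Real.sqrt_le_sqrt hbound2
    rw [Real.sqrt_sq (norm_nonneg _)] at h2
    refine h2.trans_eq ?_
    rw [Real.sqrt_mul h1ε, Real.sqrt_mul (by positivity), Real.sqrt_sq (norm_nonneg _),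
      Real.sqrt_sq (norm_nonneg _)]
  have hkey : |⟪φ x, f' ξ⟫| ≤ Real.sqrt (1 - ε) * (‖ξ‖ * ‖φ x‖) * ‖D‖ := by
    rw [hinner, hsplit]
    calc |⟪w - F.orthogonalProjection w, D⟫| ≤ ‖w - F.orthogonalProjection w‖ * ‖D‖ :=
          abs_real_inner_le_norm _ _
      _ ≤ Real.sqrt (1 - ε) * (‖ξ‖ * ‖φ x‖) * ‖D‖ :=
          mul_le_mul_of_nonneg_right hbound (norm_nonneg _)
  have hLξ : L ξ = (‖φ x‖)⁻¹ * ⟪φ x, f' ξ⟫ := by simp [L]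
  rw [Real.norm_eq_abs, hLξ, abs_mul, abs_inv, abs_of_pos hnx]
  calc ‖φ x‖⁻¹ * |⟪φ x, f' ξ⟫| ≤ ‖φ x‖⁻¹ * (Real.sqrt (1 - ε) * (‖ξ‖ * ‖φ x‖) * ‖D‖) := by
        exact mul_le_mul_of_nonneg_left hkey (by positivity)
    _ = Real.sqrt (1 - ε) * ‖D‖ * ‖ξ‖ := by field_simp
end

section
/- Let V be a real normed vector space and E₁, E₂ real inner product spaces. Let φ₁ : V → E₁ and φ₂ : V → E₂, let x ∈ V with (φ₁(x), φ₂(x)) ≠ (0,0), and suppose the functions y ↦ ‖φ₁(y)‖, y ↦ ‖φ₂(y)‖ and n(y) := √(‖φ₁(y)‖² + ‖φ₂(y)‖²) are all differentiable at x. Suppose there are real numbers α₁, α₂, N₁, N₂ ≥ 0 such that ‖d‖φ₁‖(x)‖ ≤ α₁·N₁ and ‖d‖φ₂‖(x)‖ ≤ α₂·N₂ (operator norms of the Fréchet derivatives at x). Then ‖dn(x)‖ ≤ max{α₁, α₂} · √(N₁² + N₂²). -/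
set_option maxHeartbeats 1000000 in
/-- Pointwise Kato inequality for a direct sum: if
`‖d‖φ₁‖(x)‖ ≤ α₁N₁` and `‖d‖φ₂‖(x)‖ ≤ α₂N₂`, then the norm
`n(y) = √(‖φ₁ y‖² + ‖φ₂ y‖²)` of the pair satisfies
`‖dn(x)‖ ≤ max{α₁,α₂} · √(N₁² + N₂²)`. -/
theorem stmt7 {V E₁ E₂ : Type*} [NormedAddCommGroup V] [NormedSpace ℝ V]
    [NormedAddCommGroup E₁] [InnerProductSpace ℝ E₁]
    [NormedAddCommGroup E₂] [InnerProductSpace ℝ E₂]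
    (φ₁ : V → E₁) (φ₂ : V → E₂) (x : V) (hx : ¬(φ₁ x = 0 ∧ φ₂ x = 0))
    (h₁ : DifferentiableAt ℝ (fun y => ‖φ₁ y‖) x)
    (h₂ : DifferentiableAt ℝ (fun y => ‖φ₂ y‖) x)
    (hn : DifferentiableAt ℝ (fun y => Real.sqrt (‖φ₁ y‖ ^ 2 + ‖φ₂ y‖ ^ 2)) x)
    (α₁ α₂ N₁ N₂ : ℝ) (hα₁ : 0 ≤ α₁) (hα₂ : 0 ≤ α₂) (hN₁ : 0 ≤ N₁) (hN₂ : 0 ≤ N₂)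
    (hb₁ : ‖fderiv ℝ (fun y => ‖φ₁ y‖) x‖ ≤ α₁ * N₁)
    (hb₂ : ‖fderiv ℝ (fun y => ‖φ₂ y‖) x‖ ≤ α₂ * N₂) :
    ‖fderiv ℝ (fun y => Real.sqrt (‖φ₁ y‖ ^ 2 + ‖φ₂ y‖ ^ 2)) x‖ ≤
      max α₁ α₂ * Real.sqrt (N₁ ^ 2 + N₂ ^ 2) := by
  set a := ‖φ₁ x‖ with ha
  set b := ‖φ₂ x‖ with hb
  have ha0 : 0 ≤ a := norm_nonneg _
  have hb0 : 0 ≤ b := norm_nonneg _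
  have ht : (0:ℝ) < a ^ 2 + b ^ 2 := by
    rcases not_and_or.mp hx with h | h
    · have : 0 < a := norm_pos_iff.mpr h
      positivity
    · have : 0 < b := norm_pos_iff.mpr h
      positivity
  set D₁ := fderiv ℝ (fun y => ‖φ₁ y‖) x with hD₁
  set D₂ := fderiv ℝ (fun y => ‖φ₂ y‖) x with hD₂
  have hp1 : HasFDerivAt (fun y => ‖φ₁ y‖ ^ 2) ((2 * a) • D₁) x := by
    have h := h₁.hasFDerivAt.mul h₁.hasFDerivAt
    have e : a • D₁ + a • D₁ = (2 * a) • D₁ := by rw [two_mul, add_smul]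
    rw [← e, show (fun y => ‖φ₁ y‖ ^ 2) = (fun y => ‖φ₁ y‖) * (fun y => ‖φ₁ y‖) by ext y; simp [pow_two]]; exact h
  have hp2 : HasFDerivAt (fun y => ‖φ₂ y‖ ^ 2) ((2 * b) • D₂) x := by
    have h := h₂.hasFDerivAt.mul h₂.hasFDerivAt
    have e : b • D₂ + b • D₂ = (2 * b) • D₂ := by rw [two_mul, add_smul]
    rw [← e, show (fun y => ‖φ₂ y‖ ^ 2) = (fun y => ‖φ₂ y‖) * (fun y => ‖φ₂ y‖) by ext y; simp [pow_two]]; exact h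
  have hg : HasFDerivAt (fun y => ‖φ₁ y‖ ^ 2 + ‖φ₂ y‖ ^ 2)
      ((2 * a) • D₁ + (2 * b) • D₂) x := hp1.add hp2
  have hsq : HasDerivAt Real.sqrt (1 / (2 * Real.sqrt (a ^ 2 + b ^ 2))) (a ^ 2 + b ^ 2) :=
    Real.hasDerivAt_sqrt ht.ne'
  have hcomp : HasFDerivAt (fun y => Real.sqrt (‖φ₁ y‖ ^ 2 + ‖φ₂ y‖ ^ 2))
      ((1 / (2 * Real.sqrt (a ^ 2 + b ^ 2))) • ((2 * a) • D₁ + (2 * b) • D₂))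
      x := hsq.comp_hasFDerivAt x hg
  rw [hcomp.fderiv]
  set n := Real.sqrt (a ^ 2 + b ^ 2) with hnn
  have hn0 : 0 < n := Real.sqrt_pos.mpr ht
  have hn2 : n ^ 2 = a ^ 2 + b ^ 2 := Real.sq_sqrt ht.le
  set S := Real.sqrt (N₁ ^ 2 + N₂ ^ 2) with hS
  have hS0 : 0 ≤ S := Real.sqrt_nonneg _
  have hS2 : S ^ 2 = N₁ ^ 2 + N₂ ^ 2 := Real.sq_sqrt (by positivity)
  have hbound : ‖(1 / (2 * n)) • ((2 * a) • D₁ + (2 * b) • D₂)‖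
      ≤ (1 / (2 * n)) * (2 * a * (α₁ * N₁) + 2 * b * (α₂ * N₂)) := by
    rw [norm_smul]
    have h1 : ‖(2 * a) • D₁‖ ≤ 2 * a * (α₁ * N₁) := by
      rw [norm_smul]
      have : ‖(2 * a : ℝ)‖ = 2 * a := by
        rw [Real.norm_eq_abs, abs_of_nonneg (by positivity)]
      rw [this]
      exact mul_le_mul_of_nonneg_left hb₁ (by positivity)
    have h2 : ‖(2 * b) • D₂‖ ≤ 2 * b * (α₂ * N₂) := by
      rw [norm_smul]
      have : ‖(2 * b : ℝ)‖ = 2 * b := by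
        rw [Real.norm_eq_abs, abs_of_nonneg (by positivity)]
      rw [this]
      exact mul_le_mul_of_nonneg_left hb₂ (by positivity)
    have : ‖(1 / (2 * n) : ℝ)‖ = 1 / (2 * n) := by
      rw [Real.norm_eq_abs, abs_of_nonneg (by positivity)]
    rw [this]
    refine mul_le_mul_of_nonneg_left ?_ (by positivity)
    exact le_trans (norm_add_le _ _) (add_le_add h1 h2)
  refine hbound.trans ?_
  have hmax₁ : α₁ ≤ max α₁ α₂ := le_max_left _ _
  have hmax₂ : α₂ ≤ max α₁ α₂ := le_max_right _ _
  have hmax0 : 0 ≤ max α₁ α₂ := le_trans hα₁ hmax₁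
  -- Cauchy–Schwarz: a*N₁ + b*N₂ ≤ n * S
  have hCS : a * N₁ + b * N₂ ≤ n * S := by
    have hX0 : 0 ≤ a * N₁ + b * N₂ := by positivity
    rw [hnn, hS, ← Real.sqrt_mul (by positivity)]
    rw [show ((a ^ 2 + b ^ 2) * (N₁ ^ 2 + N₂ ^ 2)) =
      (a * N₁ + b * N₂) ^ 2 + (a * N₂ - b * N₁) ^ 2 by ring]
    calc a * N₁ + b * N₂ = Real.sqrt ((a * N₁ + b * N₂) ^ 2) := by
          rw [Real.sqrt_sq hX0]
      _ ≤ _ := Real.sqrt_le_sqrt (le_add_of_nonneg_right (sq_nonneg _))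
  have step : 2 * a * (α₁ * N₁) + 2 * b * (α₂ * N₂)
      ≤ 2 * (max α₁ α₂) * (a * N₁ + b * N₂) := by
    nlinarith [mul_nonneg ha0 hN₁, mul_nonneg hb0 hN₂,
      mul_le_mul_of_nonneg_right hmax₁ (mul_nonneg ha0 hN₁),
      mul_le_mul_of_nonneg_right hmax₂ (mul_nonneg hb0 hN₂)]
  calc (1 / (2 * n)) * (2 * a * (α₁ * N₁) + 2 * b * (α₂ * N₂))
      ≤ (1 / (2 * n)) * (2 * (max α₁ α₂) * (n * S)) := by
        refine mul_le_mul_of_nonneg_left ?_ (by positivity)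
        exact step.trans (mul_le_mul_of_nonneg_left hCS (by positivity))
    _ = max α₁ α₂ * S := by field_simp
end
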